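/- Let Φ = (Φ₁,…,Φₙ) be an n-tuple of polynomials in ℤ[x₁,…,xₙ], let I(V(ℤ)) ⊆ ℤ[x₁,…,xₙ] be the kernel of (Φ*)ⁿ, and for a prime p let I(V(𝔽_p)) ⊆ 𝔽_p[x₁,…,xₙ] be the kernel of ((Φ_p)*)ⁿ, where Φ_p is the reduction of Φ modulo p. Then there exists a natural number B such that for all primes p > B, the ideal of 𝔽_p[x₁,…,xₙ] generated by the reductions modulo p of the generators of I(V(ℤ)) equals I(V(𝔽_p)). -/

import Mathlib

open MvPolynomial

/-- The substitution endomorphism `Φ* : f ↦ f ∘ Φ` of the polynomial ring `R[x₁,…,xₙ]`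
induced by an `n`-tuple `Φ` of polynomials. -/
noncomputable def substEnd (R : Type*) [CommRing R] {n : ℕ}
    (Φ : Fin n → MvPolynomial (Fin n) R) :
    MvPolynomial (Fin n) R →ₐ[R] MvPolynomial (Fin n) R :=
  MvPolynomial.aeval Φ

/-- The ideal `I(V(R))`: the kernel of the `n`-th power `(Φ*)ⁿ` of the substitution
endomorphism, i.e. the set of `f` with `f(Φⁿ) = 0`. -/
noncomputable def iterKer (R : Type*) [CommRing R] {n : ℕ}
    (Φ : Fin n → MvPolynomial (Fin n) R) : Ideal (MvPolynomial (Fin n) R) :=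
  RingHom.ker (substEnd R Φ ^ n)

variable {T : Type*} [CommRing T]


/-- ℤ-smul as multiplication. -/
lemma zsmul_mul_comm (k : ℤ) (c x : T) : k • (c * x) = c * (k • x) := by
  rw [zsmul_eq_mul, zsmul_eq_mul]; ring

/-- scalar multiplication by an element of a subalgebra is just multiplication. -/
lemma salg_smul_def {S : Subalgebra ℤ T} (c : ↥S) (x : T) : c • x = (c : T) * x := rfl

/-- The ℤ-smul map as an `↥R`-linear map. -/
def zsmulLin (R : Subalgebra ℤ T) (a : ℤ) : T →ₗ[↥R] T where
  toFun x := a • x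
  map_add' x y := smul_add a x y
  map_smul' c x := by simp only [salg_smul_def, zsmul_eq_mul, RingHom.id_apply]; ring

@[simp] lemma zsmulLin_apply (R : Subalgebra ℤ T) (a : ℤ) (x : T) : zsmulLin R a x = a • x := rfl

lemma Submodule.zsmul_mem' {R : Type*} [Ring R] {M : Type*} [AddCommGroup M] [Module R M]
    (N : Submodule R M) {x : M} (hx : x ∈ N) (k : ℤ) : k • x ∈ N :=
  N.toAddSubgroup.zsmul_mem hx k

/-- Noetherian pair bound: torsion of a f.g. submodule relative to any submodule over a
Noetherian ring is uniformly bounded. -/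
lemma noethPair (R : Subalgebra ℤ T) (hR : IsNoetherianRing ↥R)
    (X NR : Submodule ↥R T) (hX : X.FG) :
    ∃ a : ℤ, a ≠ 0 ∧ ∀ f ∈ X, ∀ k : ℤ, k ≠ 0 → k • f ∈ NR → a • f ∈ NR := by
  classical
  -- the saturation
  let sat : Submodule ↥R T :=
  { carrier := {f | f ∈ X ∧ ∃ k : ℤ, k ≠ 0 ∧ k • f ∈ NR}
    add_mem' := by
      rintro x y ⟨hx, k, hk, hkx⟩ ⟨hy, l, hl, hly⟩
      refine ⟨X.add_mem hx hy, k * l, mul_ne_zero hk hl, ?_⟩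
      rw [smul_add]
      have h1 : (k * l) • x = l • (k • x) := by rw [mul_comm, mul_smul]
      have h2 : (k * l) • y = k • (l • y) := mul_smul k l y
      rw [h1, h2]
      exact NR.add_mem (NR.zsmul_mem' hkx l) (NR.zsmul_mem' hly k)
    zero_mem' := ⟨X.zero_mem, 1, one_ne_zero, by simp⟩
    smul_mem' := by
      rintro c x ⟨hx, k, hk, hkx⟩
      refine ⟨X.smul_mem c hx, k, hk, ?_⟩
      rw [salg_smul_def, zsmul_mul_comm, ← salg_smul_def]
      exact NR.smul_mem c hkx }
  have hsatle : sat ≤ X := fun x hx => hx.1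
  -- sat is finitely generated
  haveI : Module.Finite ↥R ↥X := Module.Finite.iff_fg.2 hX
  haveI : IsNoetherian ↥R ↥X := isNoetherian_of_isNoetherianRing_of_finite ↥R ↥X
  have hsatfg : sat.FG := by
    have h1 : (Submodule.comap X.subtype sat).FG := IsNoetherian.noetherian _
    have h2 : Submodule.map X.subtype (Submodule.comap X.subtype sat) = sat := by
      rw [Submodule.map_comap_subtype, inf_eq_right.2 hsatle]
    exact h2 ▸ h1.map X.subtype
  obtain ⟨G, hG⟩ := hsatfg
  -- choose torsion witnesses
  have hwit : ∀ z : T, z ∈ G → ∃ k : ℤ, k ≠ 0 ∧ k • z ∈ NR := by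
    intro z hz
    have : z ∈ sat := hG ▸ Submodule.subset_span (by exact_mod_cast hz)
    exact this.2
  choose kf hkf0 hkfm using hwit
  refine ⟨∏ z ∈ G.attach, kf z.1 z.2, ?_, ?_⟩
  · rw [Finset.prod_ne_zero_iff]; intro z _; exact hkf0 z.1 z.2
  · intro f hf k hk hkf
    have hfs : f ∈ sat := ⟨hf, k, hk, hkf⟩
    rw [← hG] at hfs
    have : Submodule.span ↥R (G : Set T) ≤ Submodule.comap (zsmulLin R (∏ z ∈ G.attach, kf z.1 z.2)) NR := by
      rw [Submodule.span_le]
      intro z hz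
      rw [SetLike.mem_coe, Submodule.mem_comap, zsmulLin_apply]
      have hzG : z ∈ G := hz
      have : (∏ w ∈ G.attach, kf w.1 w.2) = (∏ w ∈ G.attach.erase ⟨z, hzG⟩, kf w.1 w.2) * kf z hzG := by
        rw [Finset.prod_erase_mul _ _ (Finset.mem_attach _ ⟨z, hzG⟩)]
      rw [this, mul_smul]
      exact NR.zsmul_mem' (hkfm z hzG) _
    exact this hfs


/-- restrict an `R`-submodule to an `S`-submodule along `S ≤ R`. -/
def restrS {S R : Subalgebra ℤ T} (h : S ≤ R) (P : Submodule ↥R T) : Submodule ↥S T where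
  carrier := P
  add_mem' := P.add_mem
  zero_mem' := P.zero_mem
  smul_mem' := fun c x hx => P.smul_mem ⟨(c : T), h c.2⟩ hx

@[simp] lemma mem_restrS {S R : Subalgebra ℤ T} (h : S ≤ R) (P : Submodule ↥R T) (x : T) :
    x ∈ restrS h P ↔ x ∈ P := Iff.rfl

lemma noeth_sup_adjoin {S : Subalgebra ℤ T} (hS : S.FG) (s : Set T) (hs : s.Finite) :
    IsNoetherianRing ↥(S ⊔ Algebra.adjoin ℤ s) := by
  have hfg : (S ⊔ Algebra.adjoin ℤ s).FG := by
    classical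
    obtain ⟨F, hF⟩ := hS
    refine ⟨F ∪ hs.toFinset, ?_⟩
    rw [Finset.coe_union, Set.Finite.coe_toFinset, Algebra.adjoin_union, hF]
  haveI := (Subalgebra.fg_iff_finiteType _).1 hfg
  exact Algebra.FiniteType.isNoetherianRing ℤ _
theorem keyQ (r : ℕ) : ∀ (S : Subalgebra ℤ T), S.FG → ∀ (g : Fin r → T)
    (X : Submodule ↥(S ⊔ Algebra.adjoin ℤ (Set.range g)) T), X.FG →
    ∀ (N : Submodule ↥S T), N.FG → (N : Set T) ⊆ (X : Set T) →
    ∃ a : ℤ, a ≠ 0 ∧ ∀ f ∈ X, ∀ k : ℤ, k ≠ 0 → k • f ∈ N → ∃ s : ℕ, a ^ s • f ∈ N := by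
  induction r with
  | zero =>
    intro S hS g X hX N hN hNX
    have heq : S ⊔ Algebra.adjoin ℤ (Set.range g) = S := by
      rw [Set.range_eq_empty g, Algebra.adjoin_empty, sup_bot_eq]
    let NR : Submodule ↥(S ⊔ Algebra.adjoin ℤ (Set.range g)) T :=
    { carrier := N
      add_mem' := N.add_mem
      zero_mem' := N.zero_mem
      smul_mem' := fun c x hx => N.smul_mem ⟨(c : T), le_of_eq heq c.2⟩ hx }
    haveI hnoeth : IsNoetherianRing ↥(S ⊔ Algebra.adjoin ℤ (Set.range g)) :=
      noeth_sup_adjoin hS _ (Set.finite_range g)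
    obtain ⟨a, ha, hbd⟩ := noethPair _ hnoeth X NR hX
    exact ⟨a, ha, fun f hf k hk hkN => ⟨1, by rw [pow_one]; exact hbd f hf k hk hkN⟩⟩
  | succ r IH =>
    intro S hS g X hX N hN hNX
    set g' : Fin r → T := fun i => g i.castSucc with hg'def
    set θ : T := g (Fin.last r) with hθdef
    set R' : Subalgebra ℤ T := S ⊔ Algebra.adjoin ℤ (Set.range g') with hR'def
    have hSR' : S ≤ R' := le_sup_left
    haveI hnoeth : IsNoetherianRing ↥R' := noeth_sup_adjoin hS _ (Set.finite_range g')
    obtain ⟨G, hG⟩ := hX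
    -- multiplication by θ as an R'-linear map
    set μ : T →ₗ[↥R'] T :=
      { toFun := fun x => θ * x
        map_add' := mul_add θ
        map_smul' := fun c x => by
          show θ * ((c : T) * x) = (c : T) * (θ * x)
          ring } with hμdef
    have hμ : ∀ (i : ℕ) (x : T), (μ ^ i) x = θ ^ i * x := by
      intro i
      induction i with
      | zero => intro x; simp
      | succ i ih =>
        intro x
        rw [pow_succ, Module.End.mul_apply, ih (μ x)]
        show θ ^ i * (θ * x) = θ ^ (i+1) * x
        ring
    -- the filtration
    set M : ℕ → Submodule ↥R' T :=
      fun t => Submodule.span ↥R' {y | ∃ γ ∈ G, ∃ i ≤ t, y = θ ^ i * γ} with hMdef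
    have hmemM : ∀ (t : ℕ) (γ : T), γ ∈ G → ∀ i ≤ t, θ ^ i * γ ∈ M t :=
      fun t γ hγ i hi => Submodule.subset_span ⟨γ, hγ, i, hi, rfl⟩
    have hMfg : ∀ t, (M t).FG := by
      intro t
      apply Submodule.fg_span
      have : {y | ∃ γ ∈ G, ∃ i ≤ t, y = θ ^ i * γ} ⊆
          (fun p : ℕ × T => θ ^ p.1 * p.2) '' ((Set.Iic t) ×ˢ (G : Set T)) := by
        rintro y ⟨γ, hγ, i, hi, rfl⟩
        exact ⟨(i, γ), ⟨hi, hγ⟩, rfl⟩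
      exact Set.Finite.subset (Set.Finite.image _ (((Set.finite_Iic t)).prod G.finite_toSet)) this
    have hMmono : Monotone M := by
      intro t t' htt'
      apply Submodule.span_mono
      rintro y ⟨γ, hγ, i, hi, rfl⟩
      exact ⟨γ, hγ, i, le_trans hi htt', rfl⟩
    have b1 : ∀ t, Submodule.map μ (M t) ≤ M (t + 1) := by
      intro t
      rw [hMdef, Submodule.map_span, Submodule.span_le]
      rintro y ⟨z, ⟨γ, hγ, i, hi, rfl⟩, rfl⟩
      have : μ (θ ^ i * γ) = θ ^ (i + 1) * γ := by
        show θ * (θ ^ i * γ) = θ ^ (i+1) * γ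
        ring
      rw [this]
      exact hmemM (t+1) γ hγ (i+1) (by omega)
    have b1' : ∀ (j t : ℕ), Submodule.map (μ ^ j) (M t) ≤ M (t + j) := by
      intro j
      induction j with
      | zero => intro t; rw [pow_zero, Module.End.one_eq_id, Submodule.map_id]; exact le_of_eq rfl
      | succ j ih =>
        intro t
        have : (μ ^ (j+1)) = μ * μ ^ j := by rw [pow_succ']
        rw [this, Module.End.mul_eq_comp, Submodule.map_comp]
        calc Submodule.map μ (Submodule.map (μ ^ j) (M t)) ≤ Submodule.map μ (M (t + j)) :=
              Submodule.map_mono (ih t)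
          _ ≤ M (t + j + 1) := b1 (t + j)
    have b2 : ∀ t, M (t + 1) ≤ M t ⊔ Submodule.map (μ ^ t) (M 1) := by
      intro t
      induction t with
      | zero =>
        rw [pow_zero, Module.End.one_eq_id, Submodule.map_id]
        exact le_sup_right
      | succ t ih =>
        have step : M (t + 2) ≤ M (t + 1) ⊔ Submodule.map μ (M (t + 1)) := by
          rw [hMdef, Submodule.span_le]
          rintro y ⟨γ, hγ, i, hi, rfl⟩
          rcases Nat.lt_or_ge i (t + 2) with h | h
          · exact Submodule.mem_sup_left (hmemM (t+1) γ hγ i (by omega))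
          · have hieq : i = t + 2 := by omega
            subst hieq
            apply Submodule.mem_sup_right
            have : θ ^ (t+2) * γ = μ (θ ^ (t+1) * γ) := by
              show θ ^ (t+2) * γ = θ * (θ ^ (t+1) * γ); ring
            rw [this]
            exact Submodule.mem_map_of_mem (hmemM (t+1) γ hγ (t+1) le_rfl)
        calc M (t + 2) ≤ M (t+1) ⊔ Submodule.map μ (M (t + 1)) := step
          _ ≤ M (t+1) ⊔ Submodule.map μ (M t ⊔ Submodule.map (μ ^ t) (M 1)) :=
              sup_le_sup_left (Submodule.map_mono ih) _
          _ ≤ M (t+1) ⊔ Submodule.map (μ ^ (t+1)) (M 1) := by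
              rw [Submodule.map_sup]
              apply sup_le le_sup_left
              apply sup_le
              · exact le_sup_of_le_left (b1 t)
              · apply le_sup_of_le_right
                have : (μ ^ (t+1)) = μ * μ ^ t := by rw [pow_succ']
                rw [this, Module.End.mul_eq_comp, Submodule.map_comp]
    -- every element of X lies in some M t
    have hXU : ∀ f ∈ X, ∃ t, f ∈ M t := by
      set W : Subalgebra ℤ T :=
      { carrier := {c | ∀ f, (∃ t, f ∈ M t) → ∃ t, c * f ∈ M t}
        mul_mem' := by
          intro c d hc hd f hf
          obtain ⟨t, ht⟩ := hd f hf
          obtain ⟨t', ht'⟩ := hc (d * f) ⟨t, ht⟩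
          exact ⟨t', by rwa [mul_assoc]⟩
        one_mem' := fun f hf => by rwa [one_mul]
        add_mem' := by
          intro c d hc hd f hf
          obtain ⟨t, ht⟩ := hc f hf
          obtain ⟨t', ht'⟩ := hd f hf
          refine ⟨max t t', ?_⟩
          rw [add_mul]
          exact Submodule.add_mem _ (hMmono (le_max_left t t') ht)
            (hMmono (le_max_right t t') ht')
        zero_mem' := fun f _ => ⟨0, by rw [zero_mul]; exact Submodule.zero_mem _⟩
        algebraMap_mem' := by
          intro m f hf
          obtain ⟨t, ht⟩ := hf
          refine ⟨t, ?_⟩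
          have : (algebraMap ℤ T m) * f = m • f := by
            rw [algebraMap_int_eq, eq_intCast, ← zsmul_eq_mul]
          rw [this]
          exact Submodule.zsmul_mem' _ ht m } with hWdef
      have hR'W : ∀ c ∈ R', c ∈ W := by
        intro c hc f hf
        obtain ⟨t, ht⟩ := hf
        exact ⟨t, (M t).smul_mem ⟨c, hc⟩ ht⟩
      have hRW : S ⊔ Algebra.adjoin ℤ (Set.range g) ≤ W := by
        apply sup_le
        · exact fun c hc => hR'W c (hSR' hc)
        · apply Algebra.adjoin_le
          rintro y ⟨i, rfl⟩
          induction i using Fin.lastCases with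
          | last =>
            intro f hf
            obtain ⟨t, ht⟩ := hf
            exact ⟨t + 1, b1 t (Submodule.mem_map_of_mem ht)⟩
          | cast i =>
            refine hR'W (g i.castSucc) ?_
            have hmem : g i.castSucc ∈ Algebra.adjoin ℤ (Set.range g') :=
              Algebra.subset_adjoin ⟨i, rfl⟩
            exact (le_sup_right : Algebra.adjoin ℤ (Set.range g') ≤ R') hmem
      intro f hf
      rw [← hG] at hf
      induction hf using Submodule.span_induction with
      | mem x hx =>
        refine ⟨0, ?_⟩
        have : (x : T) = θ ^ 0 * x := by rw [pow_zero, one_mul]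
        rw [this]
        exact hmemM 0 x hx 0 le_rfl
      | zero => exact ⟨0, Submodule.zero_mem _⟩
      | add x y hx hy ihx ihy =>
        obtain ⟨t, ht⟩ := ihx
        obtain ⟨t', ht'⟩ := ihy
        exact ⟨max t t', Submodule.add_mem _ (hMmono (le_max_left t t') ht)
          (hMmono (le_max_right t t') ht')⟩
      | smul c x hx ihx =>
        exact hRW c.2 x ihx
    -- N is contained in some M t₁
    have hNM : ∃ t₁, (N : Set T) ⊆ (M t₁ : Set T) := by
      obtain ⟨D, hD⟩ := hN
      have hd : ∀ d ∈ D.attach, ∃ t, (d : T) ∈ M t := by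
        intro d _
        apply hXU
        apply hNX
        rw [← hD]
        exact Submodule.subset_span d.2
      choose td htd using hd
      refine ⟨D.attach.sup (fun d => td d (Finset.mem_attach _ d)), ?_⟩
      rw [← hD]
      have : Submodule.span ↥S (D : Set T) ≤
          restrS hSR' (M (D.attach.sup (fun d => td d (Finset.mem_attach _ d)))) := by
        rw [Submodule.span_le]
        intro d hd'
        rw [SetLike.mem_coe, mem_restrS]
        exact hMmono (Finset.le_sup (Finset.mem_attach _ ⟨d, hd'⟩)) (htd ⟨d, hd'⟩ (Finset.mem_attach _ _))
      intro x hx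
      exact this hx
    obtain ⟨t₁, ht₁⟩ := hNM
    -- the kernel chain
    set K : ℕ → Submodule ↥R' T := fun i => M 1 ⊓ Submodule.comap (μ ^ i) (M i) with hKdef
    have hKmono : Monotone K := by
      apply monotone_nat_of_le_succ
      intro i x hx
      obtain ⟨h1, hc⟩ := hx
      refine ⟨h1, ?_⟩
      have hc' : (μ ^ i) x ∈ M i := hc
      show (μ ^ (i+1)) x ∈ M (i+1)
      have heq2 : (μ ^ (i+1)) x = μ ((μ ^ i) x) := by
        rw [pow_succ', Module.End.mul_apply]
      rw [heq2]
      exact b1 i (Submodule.mem_map_of_mem hc')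
    haveI : Module.Finite ↥R' ↥(M 1) := Module.Finite.iff_fg.2 (hMfg 1)
    haveI : IsNoetherian ↥R' ↥(M 1) := isNoetherian_of_fg_of_noetherian _ (hMfg 1)
    obtain ⟨i₀, hi₀⟩ := monotone_stabilizes_iff_noetherian.2 this
      ⟨fun i => (K i).comap (M 1).subtype, fun i j hij => Submodule.comap_mono (hKmono hij)⟩
    have hKstab : ∀ i, i₀ ≤ i → K i = K i₀ := by
      intro i hi
      have h1 := hi₀ i hi
      have h2 := congrArg (Submodule.map (M 1).subtype) h1
      change Submodule.map (M 1).subtype (Submodule.comap (M 1).subtype (K i₀)) =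
        Submodule.map (M 1).subtype (Submodule.comap (M 1).subtype (K i)) at h2
      rw [Submodule.map_comap_subtype, Submodule.map_comap_subtype,
        inf_eq_right.2 inf_le_left, inf_eq_right.2 inf_le_left] at h2
      exact h2.symm
    -- uniform pair bound
    obtain ⟨a₂, ha₂, hbd₂⟩ := noethPair R' hnoeth (M (i₀ + 1)) (M i₀) (hMfg (i₀ + 1))
    have hpair : ∀ t, i₀ ≤ t → ∀ f ∈ M (t + 1), ∀ k : ℤ, k ≠ 0 → k • f ∈ M t → a₂ • f ∈ M t := by
      intro t ht f hf k hk hkf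
      have hf2 := b2 t hf
      rw [Submodule.mem_sup] at hf2
      obtain ⟨u, hu, v, hv, huv⟩ := hf2
      rw [Submodule.mem_map] at hv
      obtain ⟨h, hh, rfl⟩ := hv
      -- k • h ∈ K t
      have hkh : k • h ∈ K t := by
        refine ⟨Submodule.zsmul_mem' _ hh k, ?_⟩
        show (μ ^ t) (k • h) ∈ M t
        rw [map_zsmul]
        have : k • (μ ^ t) h = k • f - k • u := by
          rw [← huv, smul_add]; abel
        rw [this]
        exact Submodule.sub_mem _ hkf (Submodule.zsmul_mem' _ hu k)
      rw [hKstab t ht] at hkh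
      have hkh2 : k • ((μ ^ i₀) h) ∈ M i₀ := by
        have h4 : (μ ^ i₀) (k • h) ∈ M i₀ := hkh.2
        rwa [map_zsmul] at h4
      have hmem1 : (μ ^ i₀) h ∈ M (i₀ + 1) := by
        have : (μ ^ i₀) h ∈ Submodule.map (μ ^ i₀) (M 1) := Submodule.mem_map_of_mem hh
        have h2 := b1' i₀ 1 this
        rwa [Nat.add_comm 1 i₀] at h2
      have ha₂h : a₂ • ((μ ^ i₀) h) ∈ M i₀ := hbd₂ _ hmem1 k hk hkh2
      -- conclude
      have hsplit : (μ ^ t) h = (μ ^ (t - i₀)) ((μ ^ i₀) h) := by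
        rw [← Module.End.mul_apply, ← pow_add, Nat.sub_add_cancel ht]
      have : a₂ • f = a₂ • u + (μ ^ (t - i₀)) (a₂ • ((μ ^ i₀) h)) := by
        rw [map_zsmul, ← hsplit, ← smul_add, huv]
      rw [this]
      apply Submodule.add_mem _ (Submodule.zsmul_mem' _ hu a₂)
      have h3 := b1' (t - i₀) i₀ (Submodule.mem_map_of_mem ha₂h)
      rwa [Nat.add_sub_cancel' ht] at h3
    -- apply the induction hypothesis at level j₂
    set j₂ : ℕ := max i₀ t₁ with hj₂def
    obtain ⟨a₁, ha₁, hbd₁⟩ := IH S hS g' (M j₂) (hMfg j₂) N hN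
      (fun x hx => hMmono (le_max_right i₀ t₁) (ht₁ hx))
    refine ⟨a₁ * a₂, mul_ne_zero ha₁ ha₂, ?_⟩
    have claim : ∀ d : ℕ, ∀ f ∈ M (j₂ + d), ∀ k : ℤ, k ≠ 0 → k • f ∈ N →
        ∃ s : ℕ, (a₁ * a₂) ^ s • f ∈ N := by
      intro d
      induction d with
      | zero =>
        intro f hf k hk hkN
        obtain ⟨s, hs⟩ := hbd₁ f hf k hk hkN
        refine ⟨s, ?_⟩
        have : (a₁ * a₂) ^ s • f = a₂ ^ s • (a₁ ^ s • f) := by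
          rw [mul_pow, mul_comm, mul_smul]
        rw [this]
        exact Submodule.zsmul_mem' _ hs _
      | succ d ih =>
        intro f hf k hk hkN
        have hkfM : k • f ∈ M (j₂ + d) :=
          hMmono (le_trans (le_max_right i₀ t₁) (Nat.le_add_right j₂ d)) (ht₁ hkN)
        have ha₂f : a₂ • f ∈ M (j₂ + d) :=
          hpair (j₂ + d) (le_trans (le_max_left i₀ t₁) (Nat.le_add_right j₂ d)) f hf k hk hkfM
        have hkN2 : k • (a₂ • f) ∈ N := by
          rw [smul_comm]
          exact Submodule.zsmul_mem' _ hkN a₂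
        obtain ⟨s, hs⟩ := ih (a₂ • f) ha₂f k hk hkN2
        refine ⟨s + 1, ?_⟩
        have hcalc : (a₁ * a₂) ^ (s+1) • f = a₁ • ((a₁ * a₂) ^ s • (a₂ • f)) := by
          rw [← mul_smul, ← mul_smul]
          congr 1
          ring
        rw [hcalc]
        exact Submodule.zsmul_mem' _ hs a₁
    intro f hf k hk hkN
    obtain ⟨t, ht⟩ := hXU f hf
    exact claim t f (hMmono (Nat.le_add_left t j₂) ht) k hk hkN

lemma substEnd_comm_map (n : ℕ) (Φ : Fin n → MvPolynomial (Fin n) ℤ) (p : ℕ)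
    (f : MvPolynomial (Fin n) ℤ) :
    MvPolynomial.map (Int.castRingHom (ZMod p)) (substEnd ℤ Φ f) =
      substEnd (ZMod p) (fun i => MvPolynomial.map (Int.castRingHom (ZMod p)) (Φ i))
        (MvPolynomial.map (Int.castRingHom (ZMod p)) f) := by
  have key : (MvPolynomial.map (Int.castRingHom (ZMod p))).comp
        (substEnd ℤ Φ : MvPolynomial (Fin n) ℤ →+* MvPolynomial (Fin n) ℤ) =
      ((substEnd (ZMod p) (fun i => MvPolynomial.map (Int.castRingHom (ZMod p)) (Φ i)) :
        MvPolynomial (Fin n) (ZMod p) →+* MvPolynomial (Fin n) (ZMod p))).comp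
        (MvPolynomial.map (Int.castRingHom (ZMod p))) := by
    apply MvPolynomial.ringHom_ext
    · intro r
      simp [substEnd, MvPolynomial.aeval_C, MvPolynomial.algebraMap_eq]
    · intro i
      simp [substEnd]
  have h2 := congrArg (fun g : MvPolynomial (Fin n) ℤ →+* MvPolynomial (Fin n) (ZMod p) => g f) key
  simpa using h2

lemma substEnd_pow_comm_map (n : ℕ) (Φ : Fin n → MvPolynomial (Fin n) ℤ) (p : ℕ) (m : ℕ)
    (f : MvPolynomial (Fin n) ℤ) :
    MvPolynomial.map (Int.castRingHom (ZMod p)) ((substEnd ℤ Φ ^ m) f) =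
      ((substEnd (ZMod p) (fun i => MvPolynomial.map (Int.castRingHom (ZMod p)) (Φ i))) ^ m)
        (MvPolynomial.map (Int.castRingHom (ZMod p)) f) := by
  induction m generalizing f with
  | zero => simp
  | succ m ih =>
    have h1 : (substEnd ℤ Φ ^ (m+1)) f = (substEnd ℤ Φ ^ m) (substEnd ℤ Φ f) := by
      rw [pow_succ, AlgHom.mul_apply]
    rw [h1, ih (substEnd ℤ Φ f), substEnd_comm_map]
    rw [pow_succ, AlgHom.mul_apply]

/-- There is a bound `B` such that for every prime `p > B`, the ideal of `𝔽_p[x₁,…,xₙ]`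
generated by the reductions mod `p` of (the generators of) `I(V(ℤ))` equals `I(V(𝔽_p))`,
the kernel of `((Φ_p)*)ⁿ` for the reduction `Φ_p` of `Φ` mod `p`. -/
theorem iterKer_reduction_eq_for_large_primes (n : ℕ)
    (Φ : Fin n → MvPolynomial (Fin n) ℤ) :
    ∃ B : ℕ, ∀ p : ℕ, p.Prime → p > B →
      Ideal.map (MvPolynomial.map (Int.castRingHom (ZMod p))) (iterKer ℤ Φ) =
        iterKer (ZMod p) (fun i => MvPolynomial.map (Int.castRingHom (ZMod p)) (Φ i)) := by
  classical
  set φ : MvPolynomial (Fin n) ℤ →ₐ[ℤ] MvPolynomial (Fin n) ℤ := substEnd ℤ Φ ^ n with hφdef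
  set S : Subalgebra ℤ (MvPolynomial (Fin n) ℤ) := φ.range with hSdef
  -- S is a finitely generated ℤ-algebra
  have hSfg : S.FG := by
    have h1 : S = Subalgebra.map φ ⊤ := by
      ext x
      simp [hSdef, Subalgebra.mem_map]
    have h2 : (⊤ : Subalgebra ℤ (MvPolynomial (Fin n) ℤ)) =
        Algebra.adjoin ℤ (Set.range (X : Fin n → MvPolynomial (Fin n) ℤ)) :=
      (MvPolynomial.adjoin_range_X).symm
    have hfin : (⇑φ '' Set.range (X : Fin n → MvPolynomial (Fin n) ℤ)).Finite :=
      (Set.finite_range _).image _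
    rw [h1, h2, AlgHom.map_adjoin]
    exact ⟨hfin.toFinset, by rw [Set.Finite.coe_toFinset]⟩
  -- the top submodule over R = S ⊔ adjoin(variables)
  set R : Subalgebra ℤ (MvPolynomial (Fin n) ℤ) :=
    S ⊔ Algebra.adjoin ℤ (Set.range (X : Fin n → MvPolynomial (Fin n) ℤ)) with hRdef
  have hRtop : R = ⊤ := by
    rw [hRdef, MvPolynomial.adjoin_range_X, sup_top_eq]
  have hTopfg : (⊤ : Submodule ↥R (MvPolynomial (Fin n) ℤ)).FG := by
    refine ⟨{1}, ?_⟩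
    rw [eq_top_iff]
    intro x _
    have hx : x ∈ R := by rw [hRtop]; trivial
    have h1 : (1 : MvPolynomial (Fin n) ℤ) ∈
        Submodule.span ↥R ({1} : Set (MvPolynomial (Fin n) ℤ)) :=
      Submodule.mem_span_singleton_self 1
    have h3 := Submodule.smul_mem
      (Submodule.span ↥R ({1} : Set (MvPolynomial (Fin n) ℤ))) ⟨x, hx⟩ h1
    have heq : (⟨x, hx⟩ : ↥R) • (1 : MvPolynomial (Fin n) ℤ) = x := by
      show x * 1 = x
      rw [mul_one]
    rw [heq] at h3
    simpa using h3
  -- the submodule N with carrier S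
  set N : Submodule ↥S (MvPolynomial (Fin n) ℤ) :=
    Submodule.span ↥S ({1} : Set (MvPolynomial (Fin n) ℤ)) with hNdef
  have hNfg : N.FG := ⟨{1}, by simp [hNdef]⟩
  have hNmem : ∀ x : MvPolynomial (Fin n) ℤ, x ∈ N ↔ x ∈ S := by
    intro x
    constructor
    · intro hx
      induction hx using Submodule.span_induction with
      | mem y hy => rw [Set.mem_singleton_iff.1 hy]; exact S.one_mem
      | zero => exact S.zero_mem
      | add y z _ _ ihy ihz => exact S.add_mem ihy ihz
      | smul c y _ ihy =>
        have hcy : c • y = (c : MvPolynomial (Fin n) ℤ) * y := rfl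
        rw [hcy]
        exact S.mul_mem c.2 ihy
    · intro hx
      have h1 : (1 : MvPolynomial (Fin n) ℤ) ∈ N := Submodule.subset_span rfl
      have h3 := N.smul_mem ⟨x, hx⟩ h1
      have heq : (⟨x, hx⟩ : ↥S) • (1 : MvPolynomial (Fin n) ℤ) = x := by
        show x * 1 = x
        rw [mul_one]
      rwa [heq] at h3
  -- the key bound
  obtain ⟨a, ha, hbd⟩ := keyQ n S hSfg (X : Fin n → MvPolynomial (Fin n) ℤ) ⊤ hTopfg N hNfg
    (fun x _ => trivial)
  refine ⟨a.natAbs, ?_⟩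
  intro p hp hpB
  -- p is nonzero and coprime to powers of a
  have hpz : (p : ℤ) ≠ 0 := Int.natCast_ne_zero.2 hp.ne_zero
  have hpa : ¬ ((p : ℤ) ∣ a) := by
    intro hdvd
    have h1 : p ∣ a.natAbs := by
      rw [← Int.natAbs_dvd_natAbs] at hdvd
      simpa using hdvd
    have h2 : p ≤ a.natAbs := Nat.le_of_dvd (Int.natAbs_pos.2 ha) h1
    omega
  have hcop : ∀ s : ℕ, IsCoprime ((p : ℤ)) (a ^ s) := by
    intro s
    rw [Int.isCoprime_iff_gcd_eq_one]
    have h1 : Nat.Coprime p a.natAbs := (hp.coprime_iff_not_dvd).2 (by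
      intro hd
      exact hpa (Int.natAbs_dvd_natAbs.1 (by simpa using hd)))
    have h2 : Nat.Coprime p (a ^ s).natAbs := by
      rw [Int.natAbs_pow]
      exact h1.pow_right s
    show Nat.gcd ((p : ℤ)).natAbs (a ^ s).natAbs = 1
    simpa using h2
  -- main ideal equality
  apply le_antisymm
  · rw [Ideal.map_le_iff_le_comap]
    intro f hf
    simp only [iterKer, RingHom.mem_ker] at hf
    rw [Ideal.mem_comap]
    simp only [iterKer, RingHom.mem_ker]
    rw [← substEnd_pow_comm_map]
    show MvPolynomial.map (Int.castRingHom (ZMod p)) (φ f) = 0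
    rw [hf, map_zero]
  · intro q hq
    obtain ⟨f, rfl⟩ := MvPolynomial.map_surjective (Int.castRingHom (ZMod p)) ZMod.intCast_surjective q
    simp only [iterKer, RingHom.mem_ker] at hq
    have hker : φ f ∈ RingHom.ker (MvPolynomial.map (Int.castRingHom (ZMod p)) :
        MvPolynomial (Fin n) ℤ →+* MvPolynomial (Fin n) (ZMod p)) := by
      rw [RingHom.mem_ker]
      rw [hφdef, substEnd_pow_comm_map]
      exact hq
    rw [MvPolynomial.ker_map, ZMod.ker_intCastRingHom, Ideal.map_span,
      Set.image_singleton, Ideal.mem_span_singleton] at hker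
    obtain ⟨g, hg⟩ := hker
    -- p • g lies in S
    have hCp : (C ((p : ℕ) : ℤ) : MvPolynomial (Fin n) ℤ) = ((p : ℕ) : MvPolynomial (Fin n) ℤ) := by
      rw [map_natCast]
    have hsmul : (C ((p : ℕ) : ℤ) : MvPolynomial (Fin n) ℤ) * g = ((p : ℕ) : ℤ) • g := by
      rw [zsmul_eq_mul, Int.cast_natCast, hCp]
    have hpg : ((p : ℕ) : ℤ) • g ∈ N := by
      rw [hNmem]
      have hE : ((p : ℕ) : ℤ) • g = φ f := by rw [← hsmul, ← hg]
      rw [hE]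
      exact ⟨f, rfl⟩
    obtain ⟨s, hs⟩ := hbd g trivial (((p : ℕ) : ℤ)) hpz hpg
    have hsS : a ^ s • g ∈ S := (hNmem _).1 hs
    have hpgS : ((p : ℕ) : ℤ) • g ∈ S := (hNmem _).1 hpg
    -- combine to get g ∈ S
    obtain ⟨u, v, huv⟩ := hcop s
    have hgS : g ∈ S := by
      have hgE : g = u • (((p : ℕ) : ℤ) • g) + v • (a ^ s • g) := by
        rw [← mul_smul, ← mul_smul, ← add_smul, huv, one_smul]
      rw [hgE]
      apply S.add_mem
      · rw [zsmul_eq_mul]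
        exact S.mul_mem (S.intCast_mem u) hpgS
      · rw [zsmul_eq_mul]
        exact S.mul_mem (S.intCast_mem v) hsS
    obtain ⟨h, hh⟩ := (AlgHom.mem_range φ).1 hgS
    -- f - p • h is in the kernel
    have hker2 : f - ((p : ℕ) : ℤ) • h ∈ iterKer ℤ Φ := by
      simp only [iterKer, RingHom.mem_ker]
      show φ (f - ((p : ℕ) : ℤ) • h) = 0
      rw [map_sub, map_zsmul, hh, hg, hsmul, sub_self]
    have hred : MvPolynomial.map (Int.castRingHom (ZMod p)) f =
        MvPolynomial.map (Int.castRingHom (ZMod p)) (f - ((p : ℕ) : ℤ) • h) := by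
      rw [map_sub]
      have hz : MvPolynomial.map (Int.castRingHom (ZMod p)) (((p : ℕ) : ℤ) • h) = 0 := by
        rw [zsmul_eq_mul, Int.cast_natCast, map_mul]
        have h0 : MvPolynomial.map (Int.castRingHom (ZMod p))
            (((p : ℕ)) : MvPolynomial (Fin n) ℤ) = 0 := by
          rw [← hCp, MvPolynomial.map_C]
          have hc0 : (Int.castRingHom (ZMod p)) ((p : ℕ) : ℤ) = 0 := by
            simp [ZMod.natCast_self]
          rw [hc0, map_zero]
        rw [h0, zero_mul]
      rw [hz, sub_zero]
    rw [hred]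
    exact Ideal.mem_map_of_mem _ hker2
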